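/- Let k ≥ 1 and let Q be a polynomial in the variables X_{σ,i} (σ ∈ S_{k+1}^0, 1 ≤ i ≤ k) with real coefficients that is block-invariant, i.e. invariant under every renaming of variables of the form X_{σ,i} ↦ X_{π(σ),i} for a permutation π of the index set S_{k+1}^0. Then there exists a polynomial S in the variables x_0, …, x_k with real coefficients such that for all x = (x_0,…,x_k) ∈ ℝ^{k+1}: Q(⊕_{σ∈S_{k+1}^0} x_σ) − Q(⊕_{σ∈S_{k+1}^1} x_σ) = S(x) · ∏_{0≤j<i≤k} (x_i − x_j), where Q(⊕_{σ∈S_{k+1}^1} x_σ) denotes the evaluation of Q at the assignment X_{σ,i} = x_{((0 1)∘σ)(i)}. -/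

import Mathlib

open MvPolynomial

section Aux

lemma aux_sub_update_dvd {σ : Type*} [DecidableEq σ] {R : Type*} [CommRing R] (i j : σ)
    (G : MvPolynomial σ R) :
    (X i - X j) ∣ G - bind₁ (Function.update X i (X j)) G := by
  induction G using MvPolynomial.induction_on with
  | C a => simp
  | add p q hp hq =>
    rw [map_add]
    have : p + q - (bind₁ (Function.update X i (X j)) p + bind₁ (Function.update X i (X j)) q)
        = (p - bind₁ (Function.update X i (X j)) p) + (q - bind₁ (Function.update X i (X j)) q) := by
      ring
    rw [this]; exact dvd_add hp hq
  | mul_X p l hp =>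
    rw [map_mul, bind₁_X_right]
    rcases eq_or_ne l i with rfl | hl
    · rw [Function.update_self]
      have : p * X l - bind₁ (Function.update X l (X j)) p * X j
          = (p - bind₁ (Function.update X l (X j)) p) * X l
            + bind₁ (Function.update X l (X j)) p * (X l - X j) := by ring
      rw [this]
      exact dvd_add (hp.mul_right _) (Dvd.intro_left _ rfl)
    · rw [Function.update_of_ne hl]
      have : p * X l - bind₁ (Function.update X i (X j)) p * X l
          = (p - bind₁ (Function.update X i (X j)) p) * X l := by ring
      rw [this]; exact hp.mul_right _

lemma aux_prime_X_sub_X {σ : Type*} [DecidableEq σ] {R : Type*} [CommRing R] [IsDomain R]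
    {i j : σ} (h : j ≠ i) : Prime (X i - X j : MvPolynomial σ R) := by
  let ψ := (renameEquiv R (Equiv.optionSubtypeNe i).symm).trans
    (optionEquivLeft R {b : σ // b ≠ i})
  have hψ : ψ (X i - X j) = Polynomial.X - Polynomial.C (X ⟨j, h⟩) := by
    simp [ψ, map_sub, Equiv.optionSubtypeNe_symm_self, Equiv.optionSubtypeNe_symm_of_ne h,
      optionEquivLeft_X_none, optionEquivLeft_X_some]
  have : Prime (ψ (X i - X j)) := by
    rw [hψ]; exact Polynomial.prime_X_sub_C _
  exact (MulEquiv.prime_iff (p := X i - X j) ψ.toMulEquiv).mp this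

lemma aux_prod_primes_dvd {α : Type*} [CommMonoidWithZero α] [IsCancelMulZero α] {ι : Type*} [DecidableEq ι]
    (s : Finset ι) (f : ι → α) (n : α)
    (hp : ∀ i ∈ s, Prime (f i)) (hd : ∀ i ∈ s, f i ∣ n)
    (hna : ∀ i ∈ s, ∀ j ∈ s, i ≠ j → ¬ Associated (f i) (f j)) :
    (∏ i ∈ s, f i) ∣ n := by
  induction s using Finset.induction_on generalizing n with
  | empty => simp
  | @insert a s ha ih =>
    obtain ⟨m, rfl⟩ := hd a (Finset.mem_insert_self a s)
    rw [Finset.prod_insert ha]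
    refine mul_dvd_mul_left _ (ih m (fun i hi => hp i (Finset.mem_insert_of_mem hi))
      (fun i hi => ?_) (fun i hi j hj hij => hna i (Finset.mem_insert_of_mem hi)
        j (Finset.mem_insert_of_mem hj) hij))
    have hia : i ≠ a := fun h => ha (h ▸ hi)
    have hpi := hp i (Finset.mem_insert_of_mem hi)
    have hdi := hd i (Finset.mem_insert_of_mem hi)
    rcases hpi.dvd_or_dvd hdi with h | h
    · exact absurd (hpi.associated_of_dvd (hp a (Finset.mem_insert_self a s)) h)
        (hna i (Finset.mem_insert_of_mem hi) a (Finset.mem_insert_self a s) hia)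
    · exact h

lemma aux_not_assoc {n : ℕ} {i j a b : Fin n} (hji : j < i) (hba : b < a)
    (hne : (i, j) ≠ (a, b)) :
    ¬ Associated (X i - X j : MvPolynomial (Fin n) ℝ) (X a - X b) := by
  rintro ⟨u, hu⟩
  have key : ∀ x : Fin n → ℝ, x i = x j → x a = x b := by
    intro x hx
    have h1 := congrArg (MvPolynomial.eval x) hu
    simp only [map_mul, map_sub, eval_X, hx, sub_self, zero_mul] at h1
    linarith [h1]
  have hba' : b ≠ a := ne_of_lt hba
  have hab : a ≠ b := hba'.symm
  by_cases hb : (i = b ↔ j = b)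
  · have := key (fun l => if l = b then (1:ℝ) else 0) (by by_cases h : i = b <;> simp_all)
    simp [hab] at this
  · have hone : (i = b ∧ j ≠ b) ∨ (i ≠ b ∧ j = b) := by tauto
    have hia : i ≠ a := by
      rintro rfl
      rcases hone with ⟨h1, h2⟩ | ⟨h1, h2⟩
      · exact hba' (h1.symm)
      · exact hne (by rw [h2])
    have hja : j ≠ a := by
      rintro rfl
      rcases hone with ⟨h1, h2⟩ | ⟨h1, h2⟩
      · exact lt_irrefl b (lt_trans hba (h1 ▸ hji))
      · exact hba' h2.symm
    have := key (fun l => if l = a then (1:ℝ) else 0) (by simp [hia, hja])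
    simp [hba'] at this

lemma aux_eval_bind₁ {σ τ : Type*} {R : Type*} [CommSemiring R] (x : τ → R)
    (g : σ → MvPolynomial τ R) (φ : MvPolynomial σ R) :
    MvPolynomial.eval x (bind₁ g φ) = MvPolynomial.eval (fun i => MvPolynomial.eval x (g i)) φ :=
  eval₂Hom_bind₁ _ _ _ _

end Aux

/-- If `Q` is a polynomial in the variables `X_{σ,i}` (`σ` an even permutation of
`{0,…,k}`, `1 ≤ i ≤ k`) that is invariant under every renaming `X_{σ,i} ↦ X_{π(σ),i}` for a
permutation `π` of the even permutations, then there is a polynomial `S` in `x_0,…,x_k` such that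
`Q(⊕_{σ even} x_σ) − Q(⊕_{σ odd} x_σ) = S(x) · ∏_{j<i} (x_i − x_j)` for all `x ∈ ℝ^{k+1}`. -/
theorem block_invariant_difference_factors (k : ℕ) (hk : 1 ≤ k)
    (Q : MvPolynomial
      ({σ : Equiv.Perm (Fin (k + 1)) // Equiv.Perm.sign σ = 1} × Fin k) ℝ)
    (hQ : ∀ π : Equiv.Perm {σ : Equiv.Perm (Fin (k + 1)) // Equiv.Perm.sign σ = 1},
      MvPolynomial.rename (fun q => (π q.1, q.2)) Q = Q) :
    ∃ S : MvPolynomial (Fin (k + 1)) ℝ, ∀ x : Fin (k + 1) → ℝ,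
      MvPolynomial.eval (fun q => x (q.1.1 q.2.succ)) Q
        - MvPolynomial.eval (fun q => x (Equiv.swap 0 1 (q.1.1 q.2.succ))) Q
      = MvPolynomial.eval x S * ∏ i : Fin (k + 1), ∏ j ∈ Finset.Iio i, (x i - x j) := by
  classical
  have h01 : (0 : Fin (k + 1)) ≠ 1 :=
    Fin.ne_of_val_ne (by rw [Fin.val_zero, Fin.val_one', Nat.mod_eq_of_lt (by omega)]; omega)
  set g : Equiv.Perm (Fin (k + 1)) →
      ({σ : Equiv.Perm (Fin (k + 1)) // Equiv.Perm.sign σ = 1} × Fin k) →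
      MvPolynomial (Fin (k + 1)) ℝ :=
    fun τ q => X (τ (q.1.1 q.2.succ)) with hg
  -- the polynomial obtained by substituting the variables only depends on the sign of τ
  have Tsign : ∀ τ τ' : Equiv.Perm (Fin (k + 1)),
      Equiv.Perm.sign τ = Equiv.Perm.sign τ' → bind₁ (g τ) Q = bind₁ (g τ') Q := by
    intro τ τ' hs
    have hsgn : ∀ σ : Equiv.Perm (Fin (k + 1)), Equiv.Perm.sign σ = 1 →
        Equiv.Perm.sign (τ'⁻¹ * (τ * σ)) = 1 := by
      intro σ hσ
      simp [map_mul, hσ, hs]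
    have hsgn' : ∀ σ : Equiv.Perm (Fin (k + 1)), Equiv.Perm.sign σ = 1 →
        Equiv.Perm.sign (τ⁻¹ * (τ' * σ)) = 1 := by
      intro σ hσ
      simp [map_mul, hσ, hs]
    let π : Equiv.Perm {σ : Equiv.Perm (Fin (k + 1)) // Equiv.Perm.sign σ = 1} :=
      { toFun := fun σ => ⟨τ'⁻¹ * (τ * σ.1), hsgn σ.1 σ.2⟩
        invFun := fun σ => ⟨τ⁻¹ * (τ' * σ.1), hsgn' σ.1 σ.2⟩
        left_inv := fun σ => Subtype.ext (by simp)
        right_inv := fun σ => Subtype.ext (by simp) }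
    have hfun : g τ = g τ' ∘ (fun q : {σ : Equiv.Perm (Fin (k + 1)) //
        Equiv.Perm.sign σ = 1} × Fin k => (π q.1, q.2)) := by
      funext q
      simp [hg, π, Equiv.Perm.mul_apply]
    calc bind₁ (g τ) Q
        = bind₁ (g τ') (rename (fun q : {σ : Equiv.Perm (Fin (k + 1)) //
            Equiv.Perm.sign σ = 1} × Fin k => (π q.1, q.2)) Q) := by
          rw [bind₁_rename, ← hfun]
      _ = bind₁ (g τ') Q := by rw [hQ π]
  set F : MvPolynomial (Fin (k + 1)) ℝ :=
    bind₁ (g 1) Q - bind₁ (g (Equiv.swap 0 1)) Q with hF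
  -- F is alternating
  have hswapF : ∀ a b : Fin (k + 1), a ≠ b → rename (Equiv.swap a b) F = -F := by
    intro a b hab
    have hr : ∀ τ : Equiv.Perm (Fin (k + 1)),
        rename (Equiv.swap a b) (bind₁ (g τ) Q) = bind₁ (g (Equiv.swap a b * τ)) Q := by
      intro τ
      rw [rename_bind₁]
      have hfun : (fun i => rename (Equiv.swap a b) (g τ i)) = g (Equiv.swap a b * τ) := by
        funext q
        simp [hg, Equiv.Perm.mul_apply]
      rw [hfun]
    rw [hF, map_sub, hr, hr]
    rw [Tsign (Equiv.swap a b * 1) (Equiv.swap 0 1)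
      (by simp [Equiv.Perm.sign_swap hab, Equiv.Perm.sign_swap h01]),
      Tsign (Equiv.swap a b * Equiv.swap 0 1) 1
      (by simp [map_mul, Equiv.Perm.sign_swap hab, Equiv.Perm.sign_swap h01])]
    ring
  -- each linear factor divides F
  have hdvd : ∀ i j : Fin (k + 1), i ≠ j → (X i - X j) ∣ F := by
    intro i j hij
    have hcomp : (Function.update X i (X j) : Fin (k + 1) → MvPolynomial (Fin (k + 1)) ℝ)
        ∘ (Equiv.swap i j) = Function.update X i (X j) := by
      funext l
      show Function.update X i (X j) (Equiv.swap i j l) = Function.update X i (X j) l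
      rcases eq_or_ne l i with rfl | hli
      · rw [Equiv.swap_apply_left, Function.update_of_ne (Ne.symm hij), Function.update_self]
      · rcases eq_or_ne l j with rfl | hlj
        · rw [Equiv.swap_apply_right, Function.update_self,
            Function.update_of_ne (Ne.symm hij)]
        · rw [Equiv.swap_apply_of_ne_of_ne hli hlj]
    have e1 : bind₁ (Function.update X i (X j)) (rename (Equiv.swap i j) F)
        = bind₁ (Function.update X i (X j)) F := by rw [bind₁_rename, hcomp]
    rw [hswapF i j hij, map_neg] at e1
    have h2 : (2 : MvPolynomial (Fin (k + 1)) ℝ) * bind₁ (Function.update X i (X j)) F = 0 := by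
      linear_combination -e1
    have h0 : bind₁ (Function.update X i (X j)) F = 0 := by
      rcases mul_eq_zero.mp h2 with h | h
      · exact absurd h two_ne_zero
      · exact h
    have := aux_sub_update_dvd i j F
    rwa [h0, sub_zero] at this
  -- the full Vandermonde product divides F
  set P : Finset ((_ : Fin (k + 1)) × Fin (k + 1)) := Finset.univ.sigma fun i => Finset.Iio i
    with hP
  have hmem : ∀ p ∈ P, p.2 < p.1 := by
    intro p hp
    rw [hP, Finset.mem_sigma] at hp
    exact Finset.mem_Iio.mp hp.2
  have hVdvd : (∏ p ∈ P, (X p.1 - X p.2 : MvPolynomial (Fin (k + 1)) ℝ)) ∣ F := by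
    refine aux_prod_primes_dvd P _ F (fun p hp => aux_prime_X_sub_X (ne_of_lt (hmem p hp)))
      (fun p hp => hdvd p.1 p.2 (ne_of_lt (hmem p hp)).symm) (fun p hp q hq hpq => ?_)
    refine aux_not_assoc (hmem p hp) (hmem q hq) (fun hc => hpq ?_)
    obtain ⟨p1, p2⟩ := p
    obtain ⟨q1, q2⟩ := q
    simp only [Prod.mk.injEq] at hc
    obtain ⟨h1, h2⟩ := hc
    subst h1; subst h2; rfl
  obtain ⟨S, hFS⟩ := hVdvd
  refine ⟨S, fun x => ?_⟩
  have hevF : MvPolynomial.eval x F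
      = MvPolynomial.eval (fun q : {σ : Equiv.Perm (Fin (k + 1)) //
            Equiv.Perm.sign σ = 1} × Fin k => x (q.1.1 q.2.succ)) Q
        - MvPolynomial.eval (fun q : {σ : Equiv.Perm (Fin (k + 1)) //
            Equiv.Perm.sign σ = 1} × Fin k => x (Equiv.swap 0 1 (q.1.1 q.2.succ))) Q := by
    rw [hF, map_sub, aux_eval_bind₁, aux_eval_bind₁]
    simp [hg]
  have hV : MvPolynomial.eval x (∏ p ∈ P, (X p.1 - X p.2 : MvPolynomial (Fin (k + 1)) ℝ))
      = ∏ i : Fin (k + 1), ∏ j ∈ Finset.Iio i, (x i - x j) := by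
    rw [map_prod]
    simp only [map_sub, eval_X]
    rw [hP, Finset.prod_sigma]
  rw [← hevF, hFS, map_mul, hV, mul_comm]
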